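/- Let T be an ordered rooted tree with rank R(T) = W ≥ 2. Then every child c of the root satisfies R(T_c) ≤ W, and at most one child c of the root has R(T_c) = W. -/

import Mathlib

/-- A finite (ordered) rooted tree: a root together with the list of subtrees
rooted at its children, listed from left to right. -/
inductive RTree : Type where
  | node : List RTree → RTree

namespace RTree

/-- The subtrees rooted at the children of the root, from left to right. -/
def children : RTree → List RTree
  | node cs => cs

/-- A rank-`W`-witness for a tree whose root has `rs.length ≥ 1` children,
where `rs` is the list of ranks of the children subtrees (left to right,
`0`-indexed).  It consists of a set `big` of big children (the others are
small), a coordinate `X` with `1 ≤ X ≤ W`, and the index `v` of the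
vertical child, which must be big, subject to (R1ℓ), (R1r), (R2ℓ), (R2r)
and (R3). -/
def IsRankWitness (rs : List ℕ) (W : ℕ) (big : Finset (Fin rs.length)) (X : ℕ)
    (v : Fin rs.length) : Prop :=
  1 ≤ X ∧ X ≤ W ∧ v ∈ big ∧
  -- (R1ℓ): at most X-1 big children are strictly left of c_v
  ((big.filter fun i => i < v).card < X) ∧
  -- (R1r): at most W-X big children are strictly right of c_v
  ((big.filter fun i => v < i).card + X ≤ W) ∧
  -- (R2ℓ): every small child left of c_v has rank ≤ X-1-ℓ_i
  (∀ i : Fin rs.length, i ∉ big → i < v →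
      rs.get i + (big.filter fun j => j < i).card + 1 ≤ X) ∧
  -- (R2r): every small child right of c_v has rank ≤ W-X-r_i
  (∀ i : Fin rs.length, i ∉ big → v < i →
      rs.get i + (big.filter fun j => i < j).card + X ≤ W) ∧
  -- (R3): injective rank-bounds π : big → {1,…,W} dominating the ranks
  (∃ π : Fin rs.length → ℕ,
      (∀ i ∈ big, rs.get i ≤ π i ∧ 1 ≤ π i ∧ π i ≤ W) ∧
      Set.InjOn π big)

/-- `T` (with child rank list `rs`) has some rank-`W`-witness. -/
def hasRankWitness (rs : List ℕ) (W : ℕ) : Prop :=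
  ∃ (big : Finset (Fin rs.length)) (X : ℕ) (v : Fin rs.length),
    IsRankWitness rs W big X v

/-- Rank of a tree, given the list of ranks of the children of the root:
`1` for a single node, else the smallest `W ≥ 1` admitting a rank-`W`-witness. -/
noncomputable def rankAux (rs : List ℕ) : ℕ :=
  if rs = [] then 1 else sInf {W | 1 ≤ W ∧ hasRankWitness rs W}

/-- The rank `R(T)` of an ordered rooted tree. -/
noncomputable def rank : RTree → ℕ
  | node cs => rankAux (cs.attach.map fun c => rank c.1)
decreasing_by have := List.sizeOf_lt_of_mem c.2; simp only [RTree.node.sizeOf_spec]; omega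

/-- A left-corner-`W`-witness, given the list `rs` of ranks of the children of
the root: a number `W'` with `1 ≤ W' ≤ W+1` and indices
`σ(W') < … < σ(W)` (1-based positions in `{1,…,d}`, so the rank of child
`σ w` is `rs.getD (σ w - 1) 0`) satisfying (C1) and (C2), where by
convention `σ(W'-1) = 0` and `σ(W+1) = d+1`. -/
def IsLeftCornerWitness (rs : List ℕ) (W W' : ℕ) (σ : ℕ → ℕ) : Prop :=
  1 ≤ W' ∧ W' ≤ W + 1 ∧
  (∀ w, W' ≤ w → w ≤ W → 1 ≤ σ w ∧ σ w ≤ rs.length) ∧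
  (∀ w, W' ≤ w → w + 1 ≤ W → σ w < σ (w + 1)) ∧
  -- (C1)
  (∀ w, W' ≤ w → w ≤ W → rs.getD (σ w - 1) 0 = w) ∧
  -- (C2): for `W'-1 ≤ w ≤ W`, children strictly between σ(w) and σ(w+1)
  -- have rank ≤ w-1
  (∀ w, W' ≤ w + 1 → w ≤ W → ∀ i,
      (if W' ≤ w then σ w else 0) < i →
      i < (if w + 1 ≤ W then σ (w + 1) else rs.length + 1) →
      rs.getD (i - 1) 0 + 1 ≤ w)

/-- A right-corner-`W`-witness: the mirror notion, with
`σ(W) < … < σ(W')` and the conventions `σ(W'-1) = d+1`, `σ(W+1) = 0`. -/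
def IsRightCornerWitness (rs : List ℕ) (W W' : ℕ) (σ : ℕ → ℕ) : Prop :=
  1 ≤ W' ∧ W' ≤ W + 1 ∧
  (∀ w, W' ≤ w → w ≤ W → 1 ≤ σ w ∧ σ w ≤ rs.length) ∧
  (∀ w, W' ≤ w → w + 1 ≤ W → σ (w + 1) < σ w) ∧
  -- (C1)
  (∀ w, W' ≤ w → w ≤ W → rs.getD (σ w - 1) 0 = w) ∧
  -- (C2)
  (∀ w, W' ≤ w + 1 → w ≤ W → ∀ i,
      (if w + 1 ≤ W then σ (w + 1) else 0) < i →
      i < (if W' ≤ w then σ w else rs.length + 1) →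
      rs.getD (i - 1) 0 + 1 ≤ w)

end RTree

namespace RTree


lemma witness_bounds {rs : List ℕ} {W : ℕ} (hW : 2 ≤ W)
    (h : hasRankWitness rs W) :
    (∀ i : Fin rs.length, rs.get i ≤ W) ∧
    (∀ i j : Fin rs.length, rs.get i = W → rs.get j = W → i = j) := by
  obtain ⟨big, X, v, h1, h2, hv, hR1l, hR1r, hR2l, hR2r, π, hπ, hinj⟩ := h
  have key : ∀ i : Fin rs.length, rs.get i = W → i ∈ big ∧ π i = W := by
    intro i hi
    by_cases hb : i ∈ big
    · refine ⟨hb, ?_⟩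
      obtain ⟨h1', h2', h3'⟩ := hπ i hb
      omega
    · rcases lt_trichotomy i v with hlt | heq | hgt
      · have := hR2l i hb hlt; omega
      · exact absurd (heq ▸ hv) hb
      · have := hR2r i hb hgt; omega
  constructor
  · intro i
    by_cases hb : i ∈ big
    · obtain ⟨h1', h2', h3'⟩ := hπ i hb; omega
    · rcases lt_trichotomy i v with hlt | heq | hgt
      · have := hR2l i hb hlt; omega
      · subst heq; exact absurd hv hb
      · have := hR2r i hb hgt; omega
  · intro i j hi hj
    obtain ⟨hbi, hpi⟩ := key i hi
    obtain ⟨hbj, hpj⟩ := key j hj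
    exact hinj hbi hbj (by rw [hpi, hpj])

/-- If an ordered rooted tree has rank `W ≥ 2`, then every child of the root
has rank at most `W`, and at most one child of the root has rank exactly
`W`. -/
theorem rank_children_le_and_at_most_one_eq (T : RTree) (W : ℕ)
    (hW : 2 ≤ W) (hT : rank T = W) :
    (∀ c ∈ T.children, rank c ≤ W) ∧
    (∀ i j : Fin T.children.length,
      rank (T.children.get i) = W → rank (T.children.get j) = W → i = j) := by
  obtain ⟨cs⟩ := T
  have hcs : cs ≠ [] := by
    intro h; subst h; rw [rank] at hT; simp [rankAux] at hT; omega
  have hrs : (cs.attach.map fun c => rank c.1) = cs.map rank := by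
    simp
  have hT' : rankAux (cs.map rank) = W := by
    rw [rank] at hT; rw [← hrs]; exact hT
  have hne' : cs.map rank ≠ [] := by simpa using hcs
  rw [rankAux, if_neg hne'] at hT'
  have hne : {W' | 1 ≤ W' ∧ hasRankWitness (cs.map rank) W'}.Nonempty := by
    by_contra h
    rw [Set.not_nonempty_iff_eq_empty] at h
    rw [h, Nat.sInf_empty] at hT'; omega
  have hmem := Nat.sInf_mem hne
  rw [hT'] at hmem
  obtain ⟨hle, hwit⟩ := hmem
  obtain ⟨hbd, huniq⟩ := witness_bounds hW hwit
  have hlen : (cs.map rank).length = cs.length := by simp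
  have hget : ∀ i : Fin cs.length,
      (cs.map rank).get (Fin.cast hlen.symm i) = rank (cs.get i) := by
    intro i; simp
  constructor
  · intro c hc
    obtain ⟨i, rfl⟩ := List.mem_iff_get.mp hc
    have := hbd (Fin.cast hlen.symm i)
    exact (hget i).symm.trans_le this
  · intro i j hi hj
    simp only [children] at i j hi hj
    have hi' : (cs.map rank).get (Fin.cast hlen.symm i) = W := by rw [hget]; exact hi
    have hj' : (cs.map rank).get (Fin.cast hlen.symm j) = W := by rw [hget]; exact hj
    have := huniq _ _ hi' hj'
    exact Fin.ext (by simpa [Fin.ext_iff] using this)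


end RTree
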